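/- arXiv:2010.14800 — 2 statements merged into one kernel-verified Lean document; each statement's English description precedes it below -/
import Mathlib

section
/- Let $l_1 < l_2$ and let $\varphi, \psi : [l_1,l_2] \to \mathbb{R}$ be twice continuously differentiable, not both identically zero, satisfying $\varphi'' - \varphi + \varphi\psi = 0$, $\psi'' - \alpha\psi + \frac{1}{2}\varphi^2 = 0$ with zero Dirichlet boundary conditions at $l_1, l_2$. Define $\|u\|_1^2 = \int_{l_1}^{l_2}(u^2 + u'^2)\,dx$. If $\alpha < 1$ then $\|\varphi\|_1^2 < 2\|\psi\|_1^2$; if $\alpha = 1$ then $\|\varphi\|_1^2 = 2\|\psi\|_1^2$; if $\alpha > 1$ then $\|\varphi\|_1^2 > 2\|\psi\|_1^2$, where in the strict inequality cases we additionally assume $\psi$ is not identically zero. -/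
open Set MeasureTheory intervalIntegral

section
variable {a b : ℝ}

lemma sq_int_pos (hab : a < b) {f : ℝ → ℝ} (hf : ContinuousOn f (Icc a b))
    (ha : f a = 0) (hb : f b = 0) {x0 : ℝ} (hx0 : x0 ∈ Icc a b) (hne : f x0 ≠ 0) :
    0 < ∫ x in a..b, f x ^ 2 := by
  have hx0' : x0 ∈ Ioo a b := by
    rcases hx0.1.lt_or_eq with h | h
    · rcases hx0.2.lt_or_eq with h2 | h2
      · exact ⟨h, h2⟩
      · exact absurd (h2 ▸ hb) hne
    · exact absurd (h ▸ ha) hne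
  have hca : ContinuousAt f x0 := hf.continuousAt (Icc_mem_nhds hx0'.1 hx0'.2)
  have hpos : 0 < f x0 ^ 2 := by positivity
  have hev : {y | 0 < f y ^ 2} ∈ nhds x0 := (hca.pow 2) (Ioi_mem_nhds hpos)
  have hmem : {y | 0 < f y ^ 2} ∩ Ioo a b ∈ nhds x0 :=
    Filter.inter_mem hev (Ioo_mem_nhds hx0'.1 hx0'.2)
  obtain ⟨ε, hε, hball⟩ := Metric.mem_nhds_iff.mp hmem
  set c := x0 - ε / 2
  set d := x0 + ε / 2
  have hcd : c < d := by simp [c, d]; linarith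
  have hsub : Ioo c d ⊆ {y | 0 < f y ^ 2} ∩ Ioo a b := by
    intro y hy
    apply hball
    simp only [Metric.mem_ball, Real.dist_eq, abs_lt]
    constructor <;> [skip; skip] <;> simp [c, d] at hy <;> cases hy <;> linarith
  have hsub2 : Icc c d ⊆ Icc a b := by
    have := closure_mono (hsub.trans (inter_subset_right))
    rwa [closure_Ioo hcd.ne, closure_Ioo hab.ne] at this
  have hac : a ≤ c := (hsub2 (left_mem_Icc.mpr hcd.le)).1
  have hdb : d ≤ b := (hsub2 (right_mem_Icc.mpr hcd.le)).2
  have hint : IntervalIntegrable (fun x => f x ^ 2) volume a b := by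
    apply ContinuousOn.intervalIntegrable
    rw [uIcc_of_le hab.le]; exact hf.pow 2
  have hi1 : IntervalIntegrable (fun x => f x ^ 2) volume a c :=
    hint.mono_set (by rw [uIcc_of_le hac, uIcc_of_le hab.le]; exact Icc_subset_Icc le_rfl (hcd.le.trans hdb))
  have hi2 : IntervalIntegrable (fun x => f x ^ 2) volume c d :=
    hint.mono_set (by rw [uIcc_of_le hcd.le, uIcc_of_le hab.le]; exact hsub2)
  have hi3 : IntervalIntegrable (fun x => f x ^ 2) volume d b :=
    hint.mono_set (by rw [uIcc_of_le hdb, uIcc_of_le hab.le]; exact Icc_subset_Icc (hac.trans hcd.le) le_rfl)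
  have hsplit : (∫ x in a..b, f x ^ 2) =
      (∫ x in a..c, f x ^ 2) + (∫ x in c..d, f x ^ 2) + (∫ x in d..b, f x ^ 2) := by
    rw [integral_add_adjacent_intervals hi1 hi2, integral_add_adjacent_intervals (hi1.trans hi2) hi3]
  rw [hsplit]
  have h1 : 0 ≤ ∫ x in a..c, f x ^ 2 := integral_nonneg hac (fun x _ => by positivity)
  have h3 : 0 ≤ ∫ x in d..b, f x ^ 2 := integral_nonneg hdb (fun x _ => by positivity)
  have h2 : 0 < ∫ x in c..d, f x ^ 2 :=
    intervalIntegral_pos_of_pos_on hi2 (fun x hx => (hsub hx).1) hcd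
  linarith

end

theorem sobolev_norm_trichotomy (l1 l2 α : ℝ) (hl : l1 < l2)
    (φ φ' φ'' ψ ψ' ψ'' : ℝ → ℝ)
    (hφ1 : ∀ x ∈ Set.Icc l1 l2, HasDerivAt φ (φ' x) x)
    (hφ2 : ∀ x ∈ Set.Icc l1 l2, HasDerivAt φ' (φ'' x) x)
    (hψ1 : ∀ x ∈ Set.Icc l1 l2, HasDerivAt ψ (ψ' x) x)
    (hψ2 : ∀ x ∈ Set.Icc l1 l2, HasDerivAt ψ' (ψ'' x) x)
    (hφ''c : ContinuousOn φ'' (Set.Icc l1 l2)) (hψ''c : ContinuousOn ψ'' (Set.Icc l1 l2))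
    (hode1 : ∀ x ∈ Set.Icc l1 l2, φ'' x - φ x + φ x * ψ x = 0)
    (hode2 : ∀ x ∈ Set.Icc l1 l2, ψ'' x - α * ψ x + (1 / 2) * φ x ^ 2 = 0)
    (hbc : φ l1 = 0 ∧ φ l2 = 0 ∧ ψ l1 = 0 ∧ ψ l2 = 0)
    (hnz : ¬ ∀ x ∈ Set.Icc l1 l2, φ x = 0 ∧ ψ x = 0) :
    (α < 1 → (∃ x ∈ Set.Icc l1 l2, ψ x ≠ 0) →
      (∫ x in l1..l2, (φ x ^ 2 + φ' x ^ 2)) < 2 * ∫ x in l1..l2, (ψ x ^ 2 + ψ' x ^ 2)) ∧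
    (α = 1 →
      (∫ x in l1..l2, (φ x ^ 2 + φ' x ^ 2)) = 2 * ∫ x in l1..l2, (ψ x ^ 2 + ψ' x ^ 2)) ∧
    (α > 1 → (∃ x ∈ Set.Icc l1 l2, ψ x ≠ 0) →
      (∫ x in l1..l2, (φ x ^ 2 + φ' x ^ 2)) > 2 * ∫ x in l1..l2, (ψ x ^ 2 + ψ' x ^ 2)) := by
  obtain ⟨hb1, hb2, hb3, hb4⟩ := hbc
  have hIcc : Set.uIcc l1 l2 = Set.Icc l1 l2 := Set.uIcc_of_le hl.le
  have hφc : ContinuousOn φ (Icc l1 l2) := fun x hx => (hφ1 x hx).continuousAt.continuousWithinAt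
  have hφ'c : ContinuousOn φ' (Icc l1 l2) := fun x hx => (hφ2 x hx).continuousAt.continuousWithinAt
  have hψc : ContinuousOn ψ (Icc l1 l2) := fun x hx => (hψ1 x hx).continuousAt.continuousWithinAt
  have hψ'c : ContinuousOn ψ' (Icc l1 l2) := fun x hx => (hψ2 x hx).continuousAt.continuousWithinAt
  have II : ∀ f : ℝ → ℝ, ContinuousOn f (Icc l1 l2) → IntervalIntegrable f volume l1 l2 := by
    intro f hf
    apply ContinuousOn.intervalIntegrable
    rwa [hIcc]
  -- integration by parts for φ
  have ibp1 : (∫ x in l1..l2, φ x * φ'' x) = - ∫ x in l1..l2, φ' x * φ' x := by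
    have := integral_mul_deriv_eq_deriv_mul
      (fun x hx => hφ1 x (hIcc ▸ hx)) (fun x hx => hφ2 x (hIcc ▸ hx))
      (II φ' hφ'c) (II φ'' hφ''c)
    rw [this, hb1, hb2]; ring
  have ibp2 : (∫ x in l1..l2, ψ x * ψ'' x) = - ∫ x in l1..l2, ψ' x * ψ' x := by
    have := integral_mul_deriv_eq_deriv_mul
      (fun x hx => hψ1 x (hIcc ▸ hx)) (fun x hx => hψ2 x (hIcc ▸ hx))
      (II ψ' hψ'c) (II ψ'' hψ''c)
    rw [this, hb3, hb4]; ring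
  -- identity 1: ∫ (φ φ'' - φ² + φ² ψ) = 0
  have key1 : (∫ x in l1..l2, (φ x * φ'' x - φ x ^ 2 + φ x ^ 2 * ψ x)) = 0 := by
    rw [show (0:ℝ) = ∫ x in l1..l2, (0:ℝ) by simp]
    apply integral_congr
    intro x hx
    rw [hIcc] at hx
    have := hode1 x hx
    have : φ x * φ'' x - φ x ^ 2 + φ x ^ 2 * ψ x = 0 := by linear_combination (φ x) * this
    simpa using this
  have key2 : (∫ x in l1..l2, (ψ x * ψ'' x - α * ψ x ^ 2 + (1/2) * (φ x ^ 2 * ψ x))) = 0 := by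
    rw [show (0:ℝ) = ∫ x in l1..l2, (0:ℝ) by simp]
    apply integral_congr
    intro x hx
    rw [hIcc] at hx
    have h := hode2 x hx
    have : ψ x * ψ'' x - α * ψ x ^ 2 + 1 / 2 * (φ x ^ 2 * ψ x) = 0 := by linear_combination (ψ x) * h
    simpa using this
  -- integrabilities
  have iφ2 := II (fun x => φ x ^ 2) (hφc.pow 2)
  have iφ'2 := II (fun x => φ' x * φ' x) (hφ'c.mul hφ'c)
  have iψ2 := II (fun x => ψ x ^ 2) (hψc.pow 2)
  have iψ'2 := II (fun x => ψ' x * ψ' x) (hψ'c.mul hψ'c)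
  have iφφ'' := II (fun x => φ x * φ'' x) (hφc.mul hφ''c)
  have iψψ'' := II (fun x => ψ x * ψ'' x) (hψc.mul hψ''c)
  have iM := II (fun x => φ x ^ 2 * ψ x) ((hφc.pow 2).mul hψc)
  -- split key1
  have split1 : (∫ x in l1..l2, φ x * φ'' x) - (∫ x in l1..l2, φ x ^ 2)
      + (∫ x in l1..l2, φ x ^ 2 * ψ x) = 0 := by
    rw [← integral_sub iφφ'' iφ2, ← integral_add (iφφ''.sub iφ2) iM]
    exact key1
  have iαψ2 : IntervalIntegrable (fun x => α * ψ x ^ 2) volume l1 l2 := iψ2.const_mul α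
  have iM2 : IntervalIntegrable (fun x => (1/2) * (φ x ^ 2 * ψ x)) volume l1 l2 := iM.const_mul (1/2)
  have split2 : (∫ x in l1..l2, ψ x * ψ'' x) - α * (∫ x in l1..l2, ψ x ^ 2)
      + (1/2) * (∫ x in l1..l2, φ x ^ 2 * ψ x) = 0 := by
    have h : (∫ x in l1..l2, ψ x * ψ'' x) - (∫ x in l1..l2, α * ψ x ^ 2)
        + (∫ x in l1..l2, (1/2) * (φ x ^ 2 * ψ x)) = 0 := by
      rw [← integral_sub iψψ'' iαψ2, ← integral_add (iψψ''.sub iαψ2) iM2]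
      exact key2
    rwa [intervalIntegral.integral_const_mul, intervalIntegral.integral_const_mul] at h
  -- goal integrals split
  have goalL : (∫ x in l1..l2, (φ x ^ 2 + φ' x ^ 2)) =
      (∫ x in l1..l2, φ x ^ 2) + (∫ x in l1..l2, φ' x * φ' x) := by
    rw [← integral_add iφ2 iφ'2]
    apply integral_congr; intro x _; ring
  have goalR : (∫ x in l1..l2, (ψ x ^ 2 + ψ' x ^ 2)) =
      (∫ x in l1..l2, ψ x ^ 2) + (∫ x in l1..l2, ψ' x * ψ' x) := by
    rw [← integral_add iψ2 iψ'2]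
    apply integral_congr; intro x _; ring
  set E1 := ∫ x in l1..l2, φ x ^ 2
  set F1 := ∫ x in l1..l2, φ' x * φ' x
  set E2 := ∫ x in l1..l2, ψ x ^ 2
  set F2 := ∫ x in l1..l2, ψ' x * ψ' x
  set M := ∫ x in l1..l2, φ x ^ 2 * ψ x
  rw [ibp1] at split1
  rw [ibp2] at split2
  -- E1 + F1 = M, M = 2α E2 + 2 F2
  have hE2pos : (∃ x ∈ Set.Icc l1 l2, ψ x ≠ 0) → 0 < E2 := by
    rintro ⟨x0, hx0, hne⟩
    exact sq_int_pos hl hψc hb3 hb4 hx0 hne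
  refine ⟨fun hα hex => ?_, fun hα => ?_, fun hα hex => ?_⟩
  · have := hE2pos hex
    rw [goalL, goalR]; nlinarith
  · rw [goalL, goalR]; subst hα; linarith
  · have := hE2pos hex
    rw [goalL, goalR]; nlinarith
end

section
/- For any $c_2 \in \mathbb{R}$, the pair $\varphi(x) = \frac{3}{\sqrt{2}}\left(1 - \tanh^2\left(\frac{x+c_2}{2}\right)\right)$ and $\psi(x) = \frac{3}{2}\left(1 - \tanh^2\left(\frac{x+c_2}{2}\right)\right)$ satisfies the coupled system $\varphi'' - \varphi + \varphi\psi = 0$ and $\psi'' - \psi + \frac{1}{2}\varphi^2 = 0$ on $\mathbb{R}$. -/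
lemma tanh_hd' (u : ℝ) :
    HasDerivAt Real.tanh (1 - Real.tanh u ^ 2) u := by
  have hc : Real.cosh u ≠ 0 := (Real.cosh_pos u).ne'
  have h := (Real.hasDerivAt_sinh u).div (Real.hasDerivAt_cosh u) hc
  have hfun : (Real.sinh / Real.cosh) = Real.tanh :=
    funext fun y => (Real.tanh_eq_sinh_div_cosh y).symm
  rw [hfun] at h
  refine h.congr_deriv ?_
  have hsq := Real.cosh_sq_sub_sinh_sq u
  rw [Real.tanh_eq_sinh_div_cosh]
  field_simp

lemma tanh_hd (c2 x : ℝ) :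
    HasDerivAt (fun y : ℝ => Real.tanh ((y + c2) / 2))
      ((1 - Real.tanh ((x + c2) / 2) ^ 2) / 2) x := by
  have h1 : HasDerivAt (fun y : ℝ => (y + c2) / 2) (1 / 2) x := by
    simpa using ((hasDerivAt_id x).add_const c2).div_const 2
  have h3 := (tanh_hd' ((x + c2) / 2)).comp x h1
  refine h3.congr_deriv ?_
  ring

lemma F_hd (c c2 x : ℝ) :
    HasDerivAt (fun y : ℝ => c * (1 - Real.tanh ((y + c2) / 2) ^ 2))
      (c * (Real.tanh ((x + c2) / 2) ^ 3 - Real.tanh ((x + c2) / 2))) x := by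
  have h := tanh_hd c2 x
  have h2 : HasDerivAt (fun y : ℝ => 1 - Real.tanh ((y + c2) / 2) ^ 2)
      ((0:ℝ) - ↑2 * Real.tanh ((x + c2) / 2) ^ (2 - 1) * ((1 - Real.tanh ((x + c2) / 2) ^ 2) / 2)) x :=
    (hasDerivAt_const x (1:ℝ)).sub (h.pow 2)
  have h3 := h2.const_mul c
  refine h3.congr_deriv ?_
  push_cast
  ring

lemma F_deriv2 (c c2 x : ℝ) :
    deriv (deriv (fun y : ℝ => c * (1 - Real.tanh ((y + c2) / 2) ^ 2))) x
      = c * ((3 * Real.tanh ((x + c2) / 2) ^ 2 - 1) * (1 - Real.tanh ((x + c2) / 2) ^ 2) / 2) := by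
  have hfun : deriv (fun y : ℝ => c * (1 - Real.tanh ((y + c2) / 2) ^ 2))
      = fun z => c * (Real.tanh ((z + c2) / 2) ^ 3 - Real.tanh ((z + c2) / 2)) :=
    funext fun z => (F_hd c c2 z).deriv
  rw [hfun]
  have h := tanh_hd c2 x
  have h2 : HasDerivAt (fun y : ℝ => c * (Real.tanh ((y + c2) / 2) ^ 3 - Real.tanh ((y + c2) / 2)))
      (c * (↑3 * Real.tanh ((x + c2) / 2) ^ 2 * ((1 - Real.tanh ((x + c2) / 2) ^ 2) / 2)
        - (1 - Real.tanh ((x + c2) / 2) ^ 2) / 2)) x :=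
    ((h.pow 3).sub h).const_mul c
  rw [h2.deriv]
  ring

theorem exact_pair_solution (c2 : ℝ) :
    (∀ x : ℝ,
      deriv (deriv (fun y => (3 / Real.sqrt 2) * (1 - Real.tanh ((y + c2) / 2) ^ 2))) x -
        (3 / Real.sqrt 2) * (1 - Real.tanh ((x + c2) / 2) ^ 2) +
        ((3 / Real.sqrt 2) * (1 - Real.tanh ((x + c2) / 2) ^ 2)) *
          ((3 / 2) * (1 - Real.tanh ((x + c2) / 2) ^ 2)) = 0) ∧
    (∀ x : ℝ,
      deriv (deriv (fun y => (3 / 2) * (1 - Real.tanh ((y + c2) / 2) ^ 2))) x -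
        (3 / 2) * (1 - Real.tanh ((x + c2) / 2) ^ 2) +
        (1 / 2) * ((3 / Real.sqrt 2) * (1 - Real.tanh ((x + c2) / 2) ^ 2)) ^ 2 = 0) := by
  have hsq : (3 / Real.sqrt 2) ^ 2 = 9 / 2 := by
    rw [div_pow, Real.sq_sqrt (by norm_num : (2:ℝ) ≥ 0)]
    norm_num
  constructor
  · intro x
    rw [F_deriv2]
    ring
  · intro x
    rw [F_deriv2, mul_pow, hsq]
    ring
end
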